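/- Let {V_1, …, V_n} be a finite collection of valuation subrings of a field K, all with quotient field K. Then D = V_1 ∩ ⋯ ∩ V_n is a Prüfer domain with quotient field K, i.e., for every prime ideal p of D the localization D_p is a valuation ring of K. -/

import Mathlib

/-- In any field, if `ξ^(2L) - ξ^L + 1 = 0` then `ξ^L` is a primitive 6th root of unity,
so `ξ` has finite multiplicative order; if moreover the order divides `L`, the expression
is `1 ≠ 0`.  Hence with `L` a common multiple of the (finite) order, it never vanishes. -/
theorem aux_pow_sub_pow_add_one_ne_zero {k : Type*} [Field k] (ξ : k) {L : ℕ} (hL : L ≠ 0)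
    (hord : orderOf ξ ≠ 0 → orderOf ξ ∣ L) : ξ ^ (2 * L) - ξ ^ L + 1 ≠ 0 := by
  intro h
  by_cases hd : orderOf ξ = 0
  · have h2 : (ξ ^ L) ^ 2 - ξ ^ L + 1 = 0 := by
      have e : ξ ^ (2 * L) = (ξ ^ L) ^ 2 := by rw [← pow_mul, mul_comm]
      rw [← e]; exact h
    have h3 : (ξ ^ L) ^ 3 = -1 := by linear_combination (ξ ^ L + 1) * h2
    have h6 : ξ ^ (6 * L) = 1 := by
      have e : ξ ^ (6 * L) = ((ξ ^ L) ^ 3) ^ 2 := by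
        rw [← pow_mul, ← pow_mul]; ring_nf
      rw [e, h3]; ring
    have hdvd := orderOf_dvd_of_pow_eq_one h6
    rw [hd] at hdvd
    have := Nat.eq_zero_of_zero_dvd hdvd
    omega
  · have hξL : ξ ^ L = 1 := orderOf_dvd_iff_pow_eq_one.mp (hord hd)
    have h2L : ξ ^ (2 * L) = 1 := by rw [mul_comm, pow_mul, hξL, one_pow]
    rw [h2L, hξL] at h
    norm_num at h

/-- The key lemma: for finitely many valuation subrings of `K` and `x ≠ 0` there is
`b ≠ 0` with `b`, `b*x`, `1-b`, `(1-b)*x⁻¹` all in every `V i`. -/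
theorem key_lemma {K : Type*} [Field K] {ι : Type*} [Finite ι] [Nonempty ι]
    (V : ι → ValuationSubring K) (x : K) (hx : x ≠ 0) :
    ∃ b : K, b ≠ 0 ∧ ∀ i, b ∈ V i ∧ b * x ∈ V i ∧ (1 - b) ∈ V i ∧ (1 - b) * x⁻¹ ∈ V i := by
  classical
  haveI := Fintype.ofFinite ι
  set ξ : ∀ i, IsLocalRing.ResidueField (V i) := fun i =>
    IsLocalRing.residue (V i) (if h : x ∈ V i then (⟨x, h⟩ : V i) else 1) with hξdef
  set L : ℕ := ∏ i, max 1 (orderOf (ξ i)) with hLdef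
  have hL1 : 1 ≤ L := Finset.one_le_prod' (fun i _ => le_max_left _ _)
  have hL0 : L ≠ 0 := by omega
  have hdvd : ∀ i, orderOf (ξ i) ≠ 0 → orderOf (ξ i) ∣ L := by
    intro i h
    have hp : max 1 (orderOf (ξ i)) ∣ L :=
      Finset.dvd_prod_of_mem (fun j => max 1 (orderOf (ξ j))) (Finset.mem_univ i)
    rwa [sup_eq_right.mpr (Nat.one_le_iff_ne_zero.mpr h)] at hp
  set F : K := x ^ (2 * L) - x ^ L + 1 with hF
  -- main per-index valuation facts
  have hmain : ∀ i,
      ((V i).valuation F = 1 ∧ (V i).valuation x ≤ 1 ∧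
        (V i).valuation (F - 1) ≤ (V i).valuation x) ∨
      ((V i).valuation F = ((V i).valuation x) ^ (2 * L) ∧ 1 < (V i).valuation x) := by
    intro i
    set v := (V i).valuation with hv
    have hvx0 : v x ≠ 0 := by
      simpa using (Valuation.ne_zero_iff v).mpr hx
    rcases le_or_gt (v x) 1 with hxle | hgt
    · -- case A : v x ≤ 1
      left
      have hxL : v (x ^ L) ≤ 1 := by
        rw [map_pow]; exact Left.pow_le_one_of_le hxle L
      have hsub1 : v (x ^ L - 1) ≤ 1 :=
        le_trans (v.map_sub _ _) (max_le hxL (le_of_eq (map_one v)))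
      have hvFm1 : v (F - 1) ≤ v x := by
        have e1 : F - 1 = x ^ L * (x ^ L - 1) := by rw [hF]; ring
        calc v (F - 1) = v (x ^ L) * v (x ^ L - 1) := by rw [e1, map_mul]
          _ ≤ v (x ^ L) * 1 := mul_le_mul_right hsub1 _
          _ = v (x ^ L) := mul_one _
          _ ≤ v x := by
              rw [map_pow]
              calc (v x) ^ L ≤ (v x) ^ 1 := pow_le_pow_right_of_le_one' hxle hL1
                _ = v x := pow_one _
      refine ⟨?_, hxle, hvFm1⟩
      rcases lt_or_eq_of_le hxle with hlt | heq
      · -- v x < 1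
        have hlt1 : v (F - 1) < 1 := lt_of_le_of_lt hvFm1 hlt
        have := Valuation.map_one_add_of_lt v hlt1
        have e : (1 : K) + (F - 1) = F := by ring
        rwa [e] at this
      · -- v x = 1 : residue field argument
        have hxmem : x ∈ V i := (V i).mem_of_valuation_le_one x hxle
        set X : V i := ⟨x, hxmem⟩ with hX
        have hXunit : IsUnit X := by
          rw [ValuationSubring.valuation_eq_one_iff]
          exact heq
        have hξi : ξ i = IsLocalRing.residue (V i) X := by
          rw [hξdef]; simp only [dif_pos hxmem]; rfl
        have hξne : (ξ i) ≠ 0 := by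
          rw [hξi]
          exact (hXunit.map (IsLocalRing.residue (V i))).ne_zero
        have hres : (ξ i) ^ (2 * L) - (ξ i) ^ L + 1 ≠ 0 :=
          aux_pow_sub_pow_add_one_ne_zero (ξ i) hL0 (hdvd i)
        set FA : V i := X ^ (2 * L) - X ^ L + 1 with hFA
        have hFAK : (FA : K) = F := by rw [hFA, hF]; push_cast; ring
        have hresFA : IsLocalRing.residue (V i) FA
            = (ξ i) ^ (2 * L) - (ξ i) ^ L + 1 := by
          rw [hFA, hξi]
          simp only [map_add, map_sub, map_pow, map_one]
        have hnm : FA ∉ IsLocalRing.maximalIdeal (V i) := by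
          intro hm
          apply hres
          rw [← hresFA]
          exact Ideal.Quotient.eq_zero_iff_mem.mpr hm
        have hlt1 : ¬ v (FA : K) < 1 := by
          rw [hv, ← ValuationSubring.valuation_lt_one_iff]
          exact hnm
        have hle1 : v (FA : K) ≤ 1 := (V i).valuation_le_one FA
        have : v (FA : K) = 1 := le_antisymm hle1 (not_lt.mp hlt1)
        rwa [hFAK] at this
    · -- case B : 1 < v x
      right
      have hPL : 1 < (v x) ^ L := by
        calc (1 : _) < v x := hgt
          _ = (v x) ^ 1 := (pow_one _).symm
          _ ≤ (v x) ^ L := pow_le_pow_right' hgt.le hL1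
      have hL2L : (v x) ^ L < (v x) ^ (2 * L) := by
        have e : (v x) ^ (2 * L) = (v x) ^ L * (v x) ^ L := by
          rw [two_mul, pow_add]
        rw [e]
        calc (v x) ^ L = (v x) ^ L * 1 := (mul_one _).symm
          _ < (v x) ^ L * (v x) ^ L :=
            mul_lt_mul_of_le_of_lt_of_nonneg_of_pos le_rfl hPL zero_le' (zero_lt_iff.mpr (pow_ne_zero L hvx0))
      have hsub : v (1 - x ^ L) < v (x ^ (2 * L)) := by
        rw [map_pow]
        refine lt_of_le_of_lt (le_trans (v.map_sub _ _) ?_) hL2L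
        apply max_le
        · rw [map_one]; exact hPL.le
        · rw [map_pow]
      have hvF : v F = (v x) ^ (2 * L) := by
        have e : F = x ^ (2 * L) + (1 - x ^ L) := by rw [hF]; ring
        rw [e, Valuation.map_add_eq_of_lt_left _ (by rwa [map_pow] at hsub ⊢ <;> skip),
          map_pow]
      exact ⟨hvF, hgt⟩
  -- F ≠ 0
  have hF0 : F ≠ 0 := by
    intro h0
    obtain ⟨i⟩ := ‹Nonempty ι›
    rcases hmain i with ⟨h1, _, _⟩ | ⟨h1, hgt⟩
    · rw [h0, map_zero] at h1; exact zero_ne_one h1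
    · rw [h0, map_zero] at h1
      have hvx0 : (V i).valuation x ≠ 0 := by
        simpa using (Valuation.ne_zero_iff ((V i).valuation)).mpr hx
      exact (pow_ne_zero (2 * L) hvx0) h1.symm
  refine ⟨F⁻¹, inv_ne_zero hF0, fun i => ?_⟩
  set v := (V i).valuation with hv
  have hvx0 : v x ≠ 0 := by simpa using (Valuation.ne_zero_iff v).mpr hx
  have hone : (1 : K) - F⁻¹ = (F - 1) * F⁻¹ := by field_simp
  rcases hmain i with ⟨h1, hxle, h2⟩ | ⟨h1, hgt⟩
  · refine ⟨?_, ?_, ?_, ?_⟩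
    · exact (V i).mem_of_valuation_le_one _ (by rw [← hv, map_inv₀, h1, inv_one])
    · exact (V i).mem_of_valuation_le_one _
        (by rw [← hv, map_mul, map_inv₀, h1, inv_one, one_mul]; exact hxle)
    · refine (V i).mem_of_valuation_le_one _ ?_
      rw [← hv, hone, map_mul, map_inv₀, h1, inv_one, mul_one]
      exact le_trans h2 hxle
    · refine (V i).mem_of_valuation_le_one _ ?_
      rw [← hv, hone, map_mul, map_mul, map_inv₀, map_inv₀, h1, inv_one, mul_one]
      calc v (F - 1) * (v x)⁻¹ ≤ v x * (v x)⁻¹ := mul_le_mul_left h2 _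
        _ = 1 := mul_inv_cancel₀ hvx0
  · have hE1 : 1 < (v x) ^ (2 * L) := by
      calc (1 : _) < v x := hgt
        _ = (v x) ^ 1 := (pow_one _).symm
        _ ≤ (v x) ^ (2 * L) := pow_le_pow_right' hgt.le (by omega)
    have hEne : (v x) ^ (2 * L) ≠ 0 := pow_ne_zero _ hvx0
    have hwE : v x ≤ (v x) ^ (2 * L) := by
      calc v x = (v x) ^ 1 := (pow_one _).symm
        _ ≤ (v x) ^ (2 * L) := pow_le_pow_right' hgt.le (by omega)
    have hvFm1 : v (F - 1) = (v x) ^ (2 * L) := by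
      have e : F - 1 = x ^ (2 * L) - x ^ L := by rw [hF]; ring
      have hlt : v (x ^ L) < v (x ^ (2 * L)) := by
        rw [map_pow, map_pow]
        have e2 : (v x) ^ (2 * L) = (v x) ^ L * (v x) ^ L := by rw [two_mul, pow_add]
        have hPL : 1 < (v x) ^ L := by
          calc (1 : _) < v x := hgt
            _ = (v x) ^ 1 := (pow_one _).symm
            _ ≤ (v x) ^ L := pow_le_pow_right' hgt.le hL1
        rw [e2]
        calc (v x) ^ L = (v x) ^ L * 1 := (mul_one _).symm
          _ < (v x) ^ L * (v x) ^ L :=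
            mul_lt_mul_of_le_of_lt_of_nonneg_of_pos le_rfl hPL zero_le' (zero_lt_iff.mpr (pow_ne_zero L hvx0))
      rw [e, Valuation.map_sub_eq_of_lt_left _ hlt, map_pow]
    refine ⟨?_, ?_, ?_, ?_⟩
    · refine (V i).mem_of_valuation_le_one _ ?_
      rw [← hv, map_inv₀, h1]
      exact inv_le_one_of_one_le₀ hE1.le
    · refine (V i).mem_of_valuation_le_one _ ?_
      rw [← hv, map_mul, map_inv₀, h1]
      calc ((v x) ^ (2 * L))⁻¹ * v x ≤ ((v x) ^ (2 * L))⁻¹ * (v x) ^ (2 * L) :=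
          mul_le_mul_right hwE _
        _ = 1 := inv_mul_cancel₀ hEne
    · refine (V i).mem_of_valuation_le_one _ ?_
      rw [← hv, hone, map_mul, map_inv₀, h1, hvFm1, mul_inv_cancel₀ hEne]
    · refine (V i).mem_of_valuation_le_one _ ?_
      rw [← hv, hone, map_mul, map_mul, map_inv₀, map_inv₀, h1, hvFm1,
        mul_inv_cancel₀ hEne, one_mul]
      exact inv_le_one_of_one_le₀ hgt.le

set_option maxHeartbeats 1000000 in
/-- Let `V₁, …, Vₙ` be a finite nonempty collection of valuation subrings of a field `K`
(each with quotient field `K`). Then `D = V₁ ∩ ⋯ ∩ Vₙ` is a Prüfer domain with quotient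
field `K`: `K` is the fraction field of `D`, and for every prime ideal `P` of `D` the
localization `D_P = {a/b : a ∈ D, b ∈ D \ P}` is a valuation ring of `K`. -/
theorem inf_valuationSubrings_prufer {K : Type*} [Field K] {ι : Type*} [Finite ι]
    [Nonempty ι] (V : ι → ValuationSubring K) :
    (∀ x : K, ∃ a b : (⨅ i, (V i).toSubring : Subring K), (b : K) ≠ 0 ∧ x * b = a) ∧
    (∀ P : Ideal (⨅ i, (V i).toSubring : Subring K), P.IsPrime →
      ∃ W : ValuationSubring K, (W : Set K) =
        {x : K | ∃ a b : (⨅ i, (V i).toSubring : Subring K), b ∉ P ∧ x * (b : K) = (a : K)}) := by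
  have hmemD : ∀ y : K, y ∈ (⨅ i, (V i).toSubring : Subring K) ↔ ∀ i, y ∈ V i := by
    intro y
    rw [Subring.mem_iInf]
    rfl
  constructor
  · intro x
    by_cases hx : x = 0
    · exact ⟨0, 1, by simp, by simp [hx]⟩
    · obtain ⟨b, hb0, hb⟩ := key_lemma V x hx
      refine ⟨⟨b * x, (hmemD _).mpr (fun i => (hb i).2.1)⟩,
        ⟨b, (hmemD _).mpr (fun i => (hb i).1)⟩, hb0, ?_⟩
      exact mul_comm x b
  · intro P hP
    have h1P : (1 : (⨅ i, (V i).toSubring : Subring K)) ∉ P :=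
      (Ideal.ne_top_iff_one P).mp hP.ne_top
    refine ⟨{
      carrier := {x : K | ∃ a b : (⨅ i, (V i).toSubring : Subring K),
        b ∉ P ∧ x * (b : K) = (a : K)}
      one_mem' := ⟨1, 1, h1P, by simp⟩
      zero_mem' := ⟨0, 1, h1P, by simp⟩
      mul_mem' := ?_
      add_mem' := ?_
      neg_mem' := ?_
      mem_or_inv_mem' := ?_ }, rfl⟩
    · rintro x y ⟨a, b, hb, hab⟩ ⟨c, d, hd, hcd⟩
      refine ⟨a * c, b * d, fun h => (hP.mem_or_mem h).elim hb hd, ?_⟩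
      push_cast
      linear_combination (y * (d : K)) * hab + (a : K) * hcd
    · rintro x y ⟨a, b, hb, hab⟩ ⟨c, d, hd, hcd⟩
      refine ⟨a * d + c * b, b * d, fun h => (hP.mem_or_mem h).elim hb hd, ?_⟩
      push_cast
      linear_combination (d : K) * hab + (b : K) * hcd
    · rintro x ⟨a, b, hb, hab⟩
      exact ⟨-a, b, hb, by push_cast; linear_combination -hab⟩
    · intro x
      by_cases hx : x = 0
      · exact Or.inl ⟨0, 1, h1P, by simp [hx]⟩
      · obtain ⟨b, hb0, hb⟩ := key_lemma V x hx
        set bD : (⨅ i, (V i).toSubring : Subring K) :=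
          ⟨b, (hmemD _).mpr (fun i => (hb i).1)⟩ with hbD
        set cD : (⨅ i, (V i).toSubring : Subring K) :=
          ⟨1 - b, (hmemD _).mpr (fun i => (hb i).2.2.1)⟩ with hcD
        by_cases hbP : bD ∈ P
        · have hcP : cD ∉ P := by
            intro hcPmem
            apply h1P
            have : (1 : (⨅ i, (V i).toSubring : Subring K)) = bD + cD := by
              ext
              push_cast [hbD, hcD]
              ring
            rw [this]
            exact Ideal.add_mem P hbP hcPmem
          refine Or.inr ⟨⟨(1 - b) * x⁻¹, (hmemD _).mpr (fun i => (hb i).2.2.2)⟩,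
            cD, hcP, ?_⟩
          show x⁻¹ * (1 - b) = (1 - b) * x⁻¹
          exact mul_comm _ _
        · refine Or.inl ⟨⟨b * x, (hmemD _).mpr (fun i => (hb i).2.1)⟩, bD, hbP, ?_⟩
          show x * b = b * x
          exact mul_comm x b
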